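/- Let A = {a,b,c,d} and let R43 be the 4-agent profile with ≿_1: {a,b} ≻ {c,d}; ≿_2: {c,d} ≻ {a,b}; ≿_3: d ≻ {a,b} ≻ c; ≿_4: a ≻ {c,d} ≻ b. Then every anonymous, neutral, and efficient SDS f satisfies f(R43)(a) = f(R43)(d) = 1/2 and f(R43)(b) = f(R43)(c) = 0. -/
import Mathlib


open Classical

noncomputable section

variable {A : Type*} [Fintype A]

/-- A (weak) preference relation: complete and transitive. -/
def IsPref (r : A → A → Prop) : Prop :=
  (∀ x y, r x y ∨ r y x) ∧ ∀ x y z, r x y → r y z → r x z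

/-- A lottery over the alternatives. -/
def Lottery (A : Type*) [Fintype A] :=
  {p : A → ℝ // (∀ x, 0 ≤ p x) ∧ ∑ x, p x = 1}

/-- Probability that lottery `p` yields an alternative at least as good as `x` w.r.t. `r`. -/
def upperSum (r : A → A → Prop) (p : Lottery A) (x : A) : ℝ :=
  ∑ y, if r y x then p.1 y else 0

/-- `p` (weakly) stochastically dominates `q` w.r.t. the preference relation `r`. -/
def SDGe (r : A → A → Prop) (p q : Lottery A) : Prop :=
  ∀ x, upperSum r q x ≤ upperSum r p x

/-- Strict stochastic dominance. -/
def SDGt (r : A → A → Prop) (p q : Lottery A) : Prop :=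
  SDGe r p q ∧ ¬ SDGe r q p

/-- A profile assigning a preference relation to each of `n` agents; validity. -/
def ValidProfile {n : ℕ} (R : Fin n → A → A → Prop) : Prop :=
  ∀ i, IsPref (R i)

/-- `p` is SD-efficient at profile `R`. -/
def SDEfficientAt {n : ℕ} (R : Fin n → A → A → Prop) (p : Lottery A) : Prop :=
  ¬ ∃ q : Lottery A, (∀ i, SDGe (R i) q p) ∧ ∃ i, SDGt (R i) q p

def Anonymous {n : ℕ} (f : (Fin n → A → A → Prop) → Lottery A) : Prop :=
  ∀ R : Fin n → A → A → Prop, ValidProfile R →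
    ∀ σ : Equiv.Perm (Fin n), f (R ∘ σ) = f R

/-- Relabel a preference relation by a permutation of the alternatives. -/
def relabel (π : Equiv.Perm A) (r : A → A → Prop) : A → A → Prop :=
  fun x y => r (π.symm x) (π.symm y)

def relabelProfile {n : ℕ} (π : Equiv.Perm A) (R : Fin n → A → A → Prop) :
    Fin n → A → A → Prop :=
  fun i => relabel π (R i)

def Neutral {n : ℕ} (f : (Fin n → A → A → Prop) → Lottery A) : Prop :=
  ∀ R : Fin n → A → A → Prop, ValidProfile R →
    ∀ (π : Equiv.Perm A) (x : A), (f (relabelProfile π R)).1 (π x) = (f R).1 x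

def Efficient {n : ℕ} (f : (Fin n → A → A → Prop) → Lottery A) : Prop :=
  ∀ R : Fin n → A → A → Prop, ValidProfile R → SDEfficientAt R (f R)

def Strategyproof {n : ℕ} (f : (Fin n → A → A → Prop) → Lottery A) : Prop :=
  ¬ ∃ (R : Fin n → A → A → Prop) (i : Fin n) (r : A → A → Prop),
      ValidProfile R ∧ IsPref r ∧ SDGt (R i) (f (Function.update R i r)) (f R)


/-- The preference relation induced by a rank function (lower rank = better). -/
def prefOfRank (ρ : Fin 4 → ℕ) : Fin 4 → Fin 4 → Prop := fun x y => ρ x ≤ ρ y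

/-- Profile `R43`: with `a = 0`, `b = 1`, `c = 2`, `d = 3`;
`≿₁: {a,b},{c,d}`, `≿₂: {c,d},{a,b}`, `≿₃: d,{a,b},c`, `≿₄: a,{c,d},b`. -/
def R43 : Fin 4 → Fin 4 → Fin 4 → Prop :=
  ![prefOfRank ![0, 0, 1, 1], prefOfRank ![1, 1, 0, 0],
    prefOfRank ![1, 1, 2, 0], prefOfRank ![0, 2, 1, 1]]

lemma prefOfRank_isPref (ρ : Fin 4 → ℕ) : IsPref (prefOfRank ρ) :=
  ⟨fun x y => Nat.le_total _ _, fun _ _ _ => Nat.le_trans⟩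

lemma R43_valid : ValidProfile R43 := by
  intro i
  fin_cases i <;> exact prefOfRank_isPref _

/-- The alternative permutation `a ↔ d`, `b ↔ c`. -/
def piA : Equiv.Perm (Fin 4) :=
  ⟨![3,2,1,0], ![3,2,1,0], by intro x; fin_cases x <;> rfl, by intro x; fin_cases x <;> rfl⟩

/-- The agent permutation `1 ↔ 2`, `3 ↔ 4`. -/
def sigmaN : Equiv.Perm (Fin 4) :=
  ⟨![1,0,3,2], ![1,0,3,2], by intro x; fin_cases x <;> rfl, by intro x; fin_cases x <;> rfl⟩

lemma relabel_R43 : relabelProfile piA R43 = R43 ∘ sigmaN := by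
  funext i x y
  apply propext
  fin_cases i <;> fin_cases x <;> fin_cases y <;>
    simp [relabelProfile, relabel, R43, prefOfRank, piA, sigmaN,
      Matrix.vecHead, Matrix.vecTail]

/-- Every anonymous, neutral, and efficient SDS puts probability `1/2` on each of `a` and
`d` and probability `0` on each of `b` and `c` at `R43`. -/
theorem R43_values (f : (Fin 4 → Fin 4 → Fin 4 → Prop) → Lottery (Fin 4))
    (hAnon : Anonymous f) (hNeut : Neutral f) (hEff : Efficient f) :
    (f R43).1 0 = 1/2 ∧ (f R43).1 3 = 1/2 ∧ (f R43).1 1 = 0 ∧ (f R43).1 2 = 0 := by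
  have hval := R43_valid
  set P := f R43 with hP
  have hsymm : ∀ x, P.1 (piA x) = P.1 x := by
    intro x
    have h1 := hNeut R43 hval piA x
    rwa [relabel_R43, hAnon R43 hval sigmaN] at h1
  have h30 : P.1 3 = P.1 0 := hsymm 0
  have h21 : P.1 2 = P.1 1 := hsymm 1
  have hnn := P.2.1
  have hsum : P.1 0 + P.1 1 + P.1 2 + P.1 3 = 1 := by
    have := P.2.2
    rwa [Fin.sum_univ_four] at this
  have hb0 : P.1 1 = 0 := by
    by_contra hb
    have hbpos : 0 < P.1 1 := lt_of_le_of_ne (hnn 1) (Ne.symm hb)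
    have h00 := hnn 0
    have h33 := hnn 3
    have hE := hEff R43 hval
    rw [← hP] at hE
    refine hE ?_
    refine ⟨⟨![P.1 0 + P.1 1, 0, 0, P.1 3 + P.1 2], ?_, ?_⟩, ?_, 2, ?_⟩
    · intro x; fin_cases x <;> simp <;> linarith
    · rw [Fin.sum_univ_four]; simp; linarith
    · intro i
      fin_cases i <;> intro x <;> fin_cases x <;>
        simp [SDGe, upperSum, Fin.sum_univ_four, R43, prefOfRank] <;> linarith
    · constructor
      · intro x; fin_cases x <;>
          simp [SDGe, upperSum, Fin.sum_univ_four, R43, prefOfRank] <;> linarith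
      · intro hcon
        have := hcon 3
        simp [upperSum, Fin.sum_univ_four, R43, prefOfRank] at this
        linarith
  have hc0 : P.1 2 = 0 := by rw [h21]; exact hb0
  have ha : P.1 0 = 1/2 := by linarith
  exact ⟨ha, by linarith, hb0, hc0⟩

end
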